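/- For n ≥ 4 the quantity p((2,2),n) satisfies (n−3)(n−2)/6 ≤ p((2,2),n) ≤ C(n−2,2). The upper bound is witnessed by the family F = {X ∈ [n]^(4) : 1 ∈ X and 2 ∈ X}, for which K_n has no (2,2)-acceptable Hamilton path. -/

import Mathlib

/-- A Hamilton path in the complete graph `K_n` is modelled as an ordering of the vertex
set, i.e. a bijection `c : Fin n ≃ Fin n` from positions to vertices; its edges are the
pairs `{c i, c (i+1)}` for `0 ≤ i < n − 1`.  Given a family `F` of 4-element subsets of
the vertex set, the Hamilton path is `(2,2)`-*acceptable* for `F` if there do not exist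
two disjoint edges of the path whose union is an element of `F`.  (Since members of `F`
have four elements, the union of two path edges lies in `F` only if the edges are
disjoint.) -/
def IsHP22Acceptable {n : ℕ} (F : Set (Finset (Fin n))) (c : Fin n ≃ Fin n) : Prop :=
  ¬ ∃ (i j : ℕ) (hi : i + 1 < n) (hj : j + 1 < n),
      ({c ⟨i, Nat.lt_of_succ_lt hi⟩, c ⟨i + 1, hi⟩} ∪
        {c ⟨j, Nat.lt_of_succ_lt hj⟩, c ⟨j + 1, hj⟩} : Finset (Fin n)) ∈ F

/-- `p22 n` is the size of the smallest family `F` of 4-element subsets of `[n]` such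
that `K_n` has no `(2,2)`-acceptable Hamilton path with respect to `F`. -/
noncomputable def p22 (n : ℕ) : ℕ :=
  sInf {m : ℕ | ∃ F : Set (Finset (Fin n)),
    (∀ A ∈ F, A.card = 4) ∧ F.ncard = m ∧
    ∀ c : Fin n ≃ Fin n, ¬ IsHP22Acceptable F c}

lemma cover_lemma (n a b : ℕ) (hn : 4 ≤ n) (hab : a < b) (hbn : b < n) :
    ∃ i j, i + 1 < n ∧ j + 1 < n ∧ (i + 1 < j ∨ j + 1 < i) ∧
      (a = i ∨ a = i + 1 ∨ a = j ∨ a = j + 1) ∧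
      (b = i ∨ b = i + 1 ∨ b = j ∨ b = j + 1) := by
  by_cases h1 : b = a + 1
  · by_cases h2 : 2 ≤ a
    · exact ⟨a, a - 2, by omega, by omega, by omega, by omega, by omega⟩
    · by_cases h3 : a + 3 < n
      · exact ⟨a, a + 2, by omega, by omega, by omega, by omega, by omega⟩
      · exact ⟨0, 2, by omega, by omega, by omega, by omega, by omega⟩
  · by_cases h2 : b + 1 < n
    · exact ⟨a, b, by omega, by omega, by omega, by omega, by omega⟩
    · by_cases h3 : a + 2 < b
      · exact ⟨a, b - 1, by omega, by omega, by omega, by omega, by omega⟩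
      · exact ⟨a - 1, b - 1, by omega, by omega, by omega, by omega, by omega⟩

lemma union_card_four {n : ℕ} (c : Fin n ≃ Fin n) {i j : ℕ}
    (hi : i + 1 < n) (hj : j + 1 < n) (hdisj : i + 1 < j ∨ j + 1 < i) :
    ({c ⟨i, Nat.lt_of_succ_lt hi⟩, c ⟨i + 1, hi⟩} ∪
      {c ⟨j, Nat.lt_of_succ_lt hj⟩, c ⟨j + 1, hj⟩} : Finset (Fin n)).card = 4 := by
  have key : ∀ (u v : Fin n), u.val ≠ v.val → c u ≠ c v := by
    intro u v h e
    exact h (congrArg Fin.val (c.injective e))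
  rw [show ({c ⟨i, Nat.lt_of_succ_lt hi⟩, c ⟨i + 1, hi⟩} ∪
      {c ⟨j, Nat.lt_of_succ_lt hj⟩, c ⟨j + 1, hj⟩} : Finset (Fin n)) =
      {c ⟨i, Nat.lt_of_succ_lt hi⟩, c ⟨i + 1, hi⟩, c ⟨j, Nat.lt_of_succ_lt hj⟩,
        c ⟨j + 1, hj⟩} from by ext x; simp [or_assoc]; tauto]
  rw [Finset.card_insert_of_notMem (by
        simp only [Finset.mem_insert, Finset.mem_singleton]
        push_neg
        exact ⟨key _ _ (by simp only [Fin.val_mk]; omega), key _ _ (by simp only [Fin.val_mk]; omega), key _ _ (by simp only [Fin.val_mk]; omega)⟩),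
      Finset.card_insert_of_notMem (by
        simp only [Finset.mem_insert, Finset.mem_singleton]
        push_neg
        exact ⟨key _ _ (by simp only [Fin.val_mk]; omega), key _ _ (by simp only [Fin.val_mk]; omega)⟩),
      Finset.card_insert_of_notMem (by
        simp only [Finset.mem_singleton]
        exact key _ _ (by simp only [Fin.val_mk]; omega)),
      Finset.card_singleton]

lemma mem_union_of_pos {n : ℕ} (c : Fin n ≃ Fin n) {i j : ℕ}
    (hi : i + 1 < n) (hj : j + 1 < n) (r : Fin n)
    (hr : r.val = i ∨ r.val = i + 1 ∨ r.val = j ∨ r.val = j + 1) :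
    c r ∈ ({c ⟨i, Nat.lt_of_succ_lt hi⟩, c ⟨i + 1, hi⟩} ∪
      {c ⟨j, Nat.lt_of_succ_lt hj⟩, c ⟨j + 1, hj⟩} : Finset (Fin n)) := by
  simp only [Finset.mem_union, Finset.mem_insert, Finset.mem_singleton]
  rcases hr with h | h | h | h
  · exact Or.inl (Or.inl (congrArg c (Fin.ext h)))
  · exact Or.inl (Or.inr (congrArg c (Fin.ext h)))
  · exact Or.inr (Or.inl (congrArg c (Fin.ext h)))
  · exact Or.inr (Or.inr (congrArg c (Fin.ext h)))

lemma blocked {n : ℕ} (hn : 4 ≤ n) (c : Fin n ≃ Fin n) :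
    ¬ IsHP22Acceptable
      {X : Finset (Fin n) | X.card = 4 ∧
        (⟨0, Nat.lt_of_lt_of_le (by norm_num) hn⟩ : Fin n) ∈ X ∧ (⟨1, Nat.lt_of_lt_of_le (by norm_num) hn⟩ : Fin n) ∈ X} c := by
  simp only [IsHP22Acceptable, not_not]
  set z0 : Fin n := ⟨0, by omega⟩
  set z1 : Fin n := ⟨1, by omega⟩
  set p := c.symm z0 with hp
  set q := c.symm z1 with hq
  have hpq : p.val ≠ q.val := by
    intro h
    have : z0 = z1 := by
      rw [← Equiv.apply_symm_apply c z0, ← Equiv.apply_symm_apply c z1]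
      exact congrArg c (Fin.ext h)
    simp [z0, z1, Fin.ext_iff] at this
  obtain ⟨i, j, hi, hj, hdisj, hca, hcb⟩ :=
    cover_lemma n (min p.val q.val) (max p.val q.val) hn (by omega)
      (max_lt p.isLt q.isLt)
  refine ⟨i, j, hi, hj, ?_, ?_, ?_⟩
  · exact union_card_four c hi hj hdisj
  · have : p.val = i ∨ p.val = i + 1 ∨ p.val = j ∨ p.val = j + 1 := by omega
    have h0 : c p = z0 := Equiv.apply_symm_apply c z0
    rw [← h0]
    exact mem_union_of_pos c hi hj p this
  · have : q.val = i ∨ q.val = i + 1 ∨ q.val = j ∨ q.val = j + 1 := by omega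
    have h1 : c q = z1 := Equiv.apply_symm_apply c z1
    rw [← h1]
    exact mem_union_of_pos c hi hj q this

lemma ncard_F0 {n : ℕ} (hn : 4 ≤ n) :
    ({X : Finset (Fin n) | X.card = 4 ∧
        (⟨0, Nat.lt_of_lt_of_le (by norm_num) hn⟩ : Fin n) ∈ X ∧ (⟨1, Nat.lt_of_lt_of_le (by norm_num) hn⟩ : Fin n) ∈ X} : Set (Finset (Fin n))).ncard
      = (n - 2).choose 2 := by
  classical
  set z0 : Fin n := ⟨0, by omega⟩
  set z1 : Fin n := ⟨1, by omega⟩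
  have hz : z0 ≠ z1 := by simp [z0, z1, Fin.ext_iff]
  set fs : Finset (Finset (Fin n)) :=
    Finset.univ.filter (fun X => X.card = 4 ∧ z0 ∈ X ∧ z1 ∈ X) with hfs
  have hset : ({X : Finset (Fin n) | X.card = 4 ∧ z0 ∈ X ∧ z1 ∈ X} : Set (Finset (Fin n))) = ↑fs := by
    ext X; simp [hfs]
  rw [hset, Set.ncard_coe_finset]
  have hsub : ∀ X : Finset (Fin n), z0 ∈ X → z1 ∈ X → ({z0, z1} : Finset (Fin n)) ⊆ X := by
    intro X h0 h1 x hx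
    simp only [Finset.mem_insert, Finset.mem_singleton] at hx
    rcases hx with rfl | rfl <;> assumption
  have hc2 : ({z0, z1} : Finset (Fin n)).card = 2 := by
    rw [Finset.card_insert_of_notMem (by simpa using hz), Finset.card_singleton]
  have hcard : fs.card = (({z0, z1}ᶜ : Finset (Fin n)).powersetCard 2).card := by
    apply Finset.card_nbij' (fun X => X \ {z0, z1}) (fun Y => Y ∪ {z0, z1})
    · intro X hX
      simp only [hfs, Finset.mem_coe, Finset.mem_filter] at hX
      obtain ⟨-, h4, h0, h1⟩ := hX
      rw [Finset.mem_coe, Finset.mem_powersetCard]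
      refine ⟨?_, ?_⟩
      · intro x hx
        simp only [Finset.mem_sdiff] at hx
        simpa using hx.2
      · rw [Finset.card_sdiff_of_subset (hsub X h0 h1), h4, hc2]
    · intro Y hY
      rw [Finset.mem_coe, Finset.mem_powersetCard] at hY
      obtain ⟨hYs, hY2⟩ := hY
      have hd : Disjoint Y ({z0, z1} : Finset (Fin n)) := by
        rw [Finset.disjoint_left]
        intro x hx hx2
        have := hYs hx
        simp only [Finset.mem_compl] at this
        exact this hx2
      simp only [hfs, Finset.mem_coe, Finset.mem_filter, Finset.mem_univ, true_and]
      refine ⟨?_, ?_, ?_⟩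
      · rw [Finset.card_union_of_disjoint hd, hY2, hc2]
      · simp
      · simp
    · intro X hX
      simp only [hfs, Finset.mem_coe, Finset.mem_filter] at hX
      obtain ⟨-, h4, h0, h1⟩ := hX
      dsimp only; rw [Finset.sdiff_union_of_subset (hsub X h0 h1)]
    · intro Y hY
      rw [Finset.mem_coe, Finset.mem_powersetCard] at hY
      obtain ⟨hYs, hY2⟩ := hY
      have hd : Disjoint Y ({z0, z1} : Finset (Fin n)) := by
        rw [Finset.disjoint_left]
        intro x hx hx2
        have := hYs hx
        simp only [Finset.mem_compl] at this
        exact this hx2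
      dsimp only; rw [Finset.union_sdiff_right, Finset.sdiff_eq_self_of_disjoint hd]
  rw [hcard, Finset.card_powersetCard, Finset.card_compl, hc2, Fintype.card_fin]

section Cyclic
variable {n : ℕ} [NeZero n]

lemma fv1 (hn : 4 ≤ n) : (1 : Fin n).val = 1 := by
  rw [Fin.val_one']; exact Nat.mod_eq_of_lt (by omega)

lemma mk_add_one (hn : 4 ≤ n) {i : ℕ} (h0 : i < n) (h : i + 1 < n) :
    (⟨i, h0⟩ : Fin n) + 1 = ⟨i + 1, h⟩ := by
  apply Fin.ext
  rw [Fin.val_add, fv1 hn]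
  exact Nat.mod_eq_of_lt h

lemma fin_one_nz (hn : 4 ≤ n) : (1 : Fin n) ≠ 0 := by
  intro h
  have := congrArg Fin.val h
  rw [fv1 hn, Fin.val_zero] at this
  omega

lemma fin_two_nz (hn : 4 ≤ n) : (1 : Fin n) + 1 ≠ 0 := by
  intro h
  have := congrArg Fin.val h
  rw [Fin.val_add, fv1 hn, Fin.val_zero, Nat.mod_eq_of_lt (by omega)] at this
  omega

lemma cyclic_blocked {F : Set (Finset (Fin n))} (hn : 4 ≤ n)
    (hb : ∀ c : Fin n ≃ Fin n, ¬ IsHP22Acceptable F c) (c : Fin n ≃ Fin n) (k : Fin n) :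
    ∃ a b : Fin n, a ≠ k ∧ b ≠ k ∧
      ({c a, c (a + 1)} ∪ {c b, c (b + 1)} : Finset (Fin n)) ∈ F := by
  obtain ⟨i, j, hi, hj, hU⟩ := not_not.mp (hb ((Equiv.addRight (k + 1)).trans c))
  set a : Fin n := ⟨i, Nat.lt_of_succ_lt hi⟩ + (k + 1) with ha
  set b : Fin n := ⟨j, Nat.lt_of_succ_lt hj⟩ + (k + 1) with hbd
  have haval : ∀ (m : ℕ) (h0 : m < n) (h : m + 1 < n),
      (⟨m, h0⟩ : Fin n) + (k + 1) + 1 = ⟨m + 1, h⟩ + (k + 1) := by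
    intro m h0 h
    rw [← mk_add_one hn h0 h]
    abel
  have hne : ∀ (m : ℕ) (h0 : m < n) (h : m + 1 < n), (⟨m, h0⟩ : Fin n) + (k + 1) ≠ k := by
    intro m h0 h heq
    have h2 : (⟨m, h0⟩ : Fin n) + 1 = 0 := by
      have e : (⟨m, h0⟩ : Fin n) + 1 = (⟨m, h0⟩ + (k + 1)) - k := by abel
      rw [e, heq, sub_self]
    rw [mk_add_one hn h0 h] at h2
    have := congrArg Fin.val h2
    rw [Fin.val_zero] at this
    simp at this
  refine ⟨a, b, hne i _ hi, hne j _ hj, ?_⟩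
  have e1 : c a = ((Equiv.addRight (k + 1)).trans c) ⟨i, Nat.lt_of_succ_lt hi⟩ := by
    simp [ha, Equiv.trans_apply, add_assoc]
  have e2 : c (a + 1) = ((Equiv.addRight (k + 1)).trans c) ⟨i + 1, hi⟩ := by
    rw [ha, haval i _ hi]; simp [Equiv.trans_apply, add_assoc]
  have e3 : c b = ((Equiv.addRight (k + 1)).trans c) ⟨j, Nat.lt_of_succ_lt hj⟩ := by
    simp [hbd, Equiv.trans_apply, add_assoc]
  have e4 : c (b + 1) = ((Equiv.addRight (k + 1)).trans c) ⟨j + 1, hj⟩ := by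
    rw [hbd, haval j _ hj]; simp [Equiv.trans_apply, add_assoc]
  rw [e1, e2, e3, e4]
  exact hU

end Cyclic

section Count
variable {n : ℕ} [NeZero n]

lemma four_le_bad (hn : 4 ≤ n) {F : Set (Finset (Fin n))} [DecidablePred (· ∈ F)]
    (h4 : ∀ A ∈ F, A.card = 4)
    (hb : ∀ c : Fin n ≃ Fin n, ¬ IsHP22Acceptable F c) (c : Fin n ≃ Fin n) :
    4 ≤ (Finset.univ.filter (fun p : Fin n × Fin n =>
      ({c p.1, c (p.1 + 1)} ∪ {c p.2, c (p.2 + 1)} : Finset (Fin n)) ∈ F)).card := by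
  obtain ⟨a, b, -, -, hab⟩ := cyclic_blocked hn hb c 0
  obtain ⟨a', b', ha', hb', hab'⟩ := cyclic_blocked hn hb c a
  have hne4 : ∀ {x y : Fin n},
      (({c x, c (x + 1)} ∪ {c y, c (y + 1)} : Finset (Fin n)) ∈ F) → x ≠ y := by
    intro x y hxy heq
    have h := h4 _ hxy
    subst heq
    rw [Finset.union_self] at h
    have h2 : ({c x, c (x + 1)} : Finset (Fin n)).card ≤ 2 :=
      le_trans (Finset.card_insert_le _ _) (by simp)
    omega
  have h1 : a ≠ b := hne4 hab
  have h2 : a' ≠ b' := hne4 hab'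
  have hab2 : ({c b, c (b + 1)} ∪ {c a, c (a + 1)} : Finset (Fin n)) ∈ F := by
    rwa [Finset.union_comm]
  have hab'2 : ({c b', c (b' + 1)} ∪ {c a', c (a' + 1)} : Finset (Fin n)) ∈ F := by
    rwa [Finset.union_comm]
  have hsub : ({(a, b), (b, a), (a', b'), (b', a')} : Finset (Fin n × Fin n)) ⊆
      Finset.univ.filter (fun p : Fin n × Fin n =>
        ({c p.1, c (p.1 + 1)} ∪ {c p.2, c (p.2 + 1)} : Finset (Fin n)) ∈ F) := by
    intro p hp
    simp only [Finset.mem_insert, Finset.mem_singleton] at hp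
    rcases hp with rfl | rfl | rfl | rfl <;>
      simp only [Finset.mem_filter, Finset.mem_univ, true_and] <;> assumption
  refine le_trans (le_of_eq ?_) (Finset.card_le_card hsub)
  rw [Finset.card_insert_of_notMem (by simp [Prod.ext_iff]; tauto),
      Finset.card_insert_of_notMem (by simp [Prod.ext_iff]; tauto),
      Finset.card_insert_of_notMem (by simp [Prod.ext_iff]; tauto),
      Finset.card_singleton]

end Count

lemma fiber_le {n : ℕ} {i i' j j' : Fin n} (h12 : i ≠ i') (h13 : i ≠ j) (h14 : i ≠ j')
    (h23 : i' ≠ j) (h24 : i' ≠ j') (h34 : j ≠ j') (X : Finset (Fin n)) (hX : X.card = 4) :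
    (Finset.univ.filter (fun c : Fin n ≃ Fin n =>
      ({c i, c i'} ∪ {c j, c j'} : Finset (Fin n)) = X)).card
      ≤ 24 * Nat.factorial (n - 4) := by
  classical
  set P : Finset (Fin n) := {i, i', j, j'} with hPdef
  have hP : P.card = 4 := by
    rw [hPdef, Finset.card_insert_of_notMem (by simp [h12, h13, h14]),
      Finset.card_insert_of_notMem (by simp [h23, h24]),
      Finset.card_insert_of_notMem (by simp [h34]), Finset.card_singleton]
  set s := Finset.univ.filter (fun c : Fin n ≃ Fin n =>
      ({c i, c i'} ∪ {c j, c j'} : Finset (Fin n)) = X) with hs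
  have hmem : ∀ c : Fin n ≃ Fin n, c ∈ s →
      (∀ x : Fin n, x ∈ P → c x ∈ X) ∧ (∀ x : Fin n, x ∉ P → c x ∉ X) := by
    intro c hc
    rw [hs, Finset.mem_filter] at hc
    obtain ⟨-, hc⟩ := hc
    constructor
    · intro x hx
      rw [hPdef] at hx
      rw [← hc]
      simp only [Finset.mem_insert, Finset.mem_singleton] at hx
      rcases hx with rfl | rfl | rfl | rfl <;> simp
    · intro x hx hmemX
      rw [← hc] at hmemX
      simp only [Finset.mem_union, Finset.mem_insert, Finset.mem_singleton] at hmemX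
      rcases hmemX with (h | h) | (h | h) <;>
        exact hx (by rw [hPdef]; simp [c.injective h])
  let g : {c : Fin n ≃ Fin n // c ∈ s} →
      ((↥P ↪ ↥X) × (↥(Pᶜ) ↪ ↥(Xᶜ))) := fun cs =>
    (⟨fun u => ⟨cs.1 u.1, (hmem cs.1 cs.2).1 u.1 u.2⟩,
        fun u v h => Subtype.ext (cs.1.injective (congrArg Subtype.val h))⟩,
     ⟨fun u => ⟨cs.1 u.1, by
          have hu := u.2
          rw [Finset.mem_compl] at hu ⊢
          exact (hmem cs.1 cs.2).2 u.1 hu⟩,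
        fun u v h => Subtype.ext (cs.1.injective (congrArg Subtype.val h))⟩)
  have hginj : Function.Injective g := by
    intro c1 c2 heq
    rw [Prod.ext_iff] at heq
    obtain ⟨e1, e2⟩ := heq
    apply Subtype.ext
    apply Equiv.ext
    intro x
    by_cases hx : x ∈ P
    · have := DFunLike.congr_fun e1 ⟨x, hx⟩
      exact congrArg Subtype.val this
    · have := DFunLike.congr_fun e2 ⟨x, Finset.mem_compl.mpr hx⟩
      exact congrArg Subtype.val this
  have hcard := Fintype.card_le_of_injective g hginj
  rw [Fintype.card_coe] at hcard
  refine le_trans hcard (le_of_eq ?_)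
  rw [Fintype.card_prod, Fintype.card_embedding_eq, Fintype.card_embedding_eq,
    Fintype.card_coe, Fintype.card_coe, Fintype.card_coe, Fintype.card_coe,
    Finset.card_compl, Finset.card_compl, Fintype.card_fin, hP, hX,
    Nat.descFactorial_self, Nat.descFactorial_self]
  norm_num [Nat.factorial]

section B
variable {n : ℕ} [NeZero n]

lemma fv1' (hn : 4 ≤ n) : (1 : Fin n).val = 1 := by
  rw [Fin.val_one']; exact Nat.mod_eq_of_lt (by omega)

lemma fin1nz (hn : 4 ≤ n) : (1 : Fin n) ≠ 0 := by
  intro h; have := congrArg Fin.val h; rw [fv1' hn, Fin.val_zero] at this; omega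

lemma fin2nz (hn : 4 ≤ n) : (1 : Fin n) + 1 ≠ 0 := by
  intro h; have := congrArg Fin.val h
  rw [Fin.val_add, fv1' hn, Fin.val_zero, Nat.mod_eq_of_lt (by omega)] at this; omega

lemma succ_ne (hn : 4 ≤ n) (i : Fin n) : i ≠ i + 1 :=
  fun h => fin1nz hn (left_eq_add.mp h)

lemma card_three_set (hn : 4 ≤ n) (i : Fin n) :
    ({i, i + 1, i - 1} : Finset (Fin n)).card = 3 := by
  have h1 : i ≠ i + 1 := succ_ne hn i
  have h2 : i ≠ i - 1 := by
    intro h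
    have : i + 1 = i := (eq_sub_iff_add_eq.mp h)
    exact fin1nz hn (left_eq_add.mp this.symm)
  have h3 : i + 1 ≠ i - 1 := by
    intro h
    have h' : i + 1 + 1 = i := eq_sub_iff_add_eq.mp h
    rw [add_assoc] at h'
    exact fin2nz hn (left_eq_add.mp h'.symm)
  rw [Finset.card_insert_of_notMem (by simp [h1, h2]),
    Finset.card_insert_of_notMem (by simp [h3]), Finset.card_singleton]

lemma A_card (hn : 4 ≤ n) :
    (Finset.univ.filter (fun p : Fin n × Fin n =>
      p.2 ≠ p.1 ∧ p.2 ≠ p.1 + 1 ∧ p.1 ≠ p.2 + 1)).card = n * (n - 3) := by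
  classical
  rw [Finset.card_filter, Fintype.sum_prod_type]
  have inner : ∀ i : Fin n,
      (∑ j : Fin n, if j ≠ i ∧ j ≠ i + 1 ∧ i ≠ j + 1 then (1 : ℕ) else 0) = n - 3 := by
    intro i
    rw [← Finset.card_filter]
    have heq : Finset.univ.filter (fun j : Fin n => j ≠ i ∧ j ≠ i + 1 ∧ i ≠ j + 1)
        = ({i, i + 1, i - 1} : Finset (Fin n))ᶜ := by
      ext j
      simp only [Finset.mem_filter, Finset.mem_univ, true_and, Finset.mem_compl,
        Finset.mem_insert, Finset.mem_singleton]
      have : i = j + 1 ↔ j = i - 1 := by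
        rw [eq_comm, eq_sub_iff_add_eq]
      tauto
    rw [heq, Finset.card_compl, card_three_set hn i, Fintype.card_fin]
  calc (∑ i : Fin n, ∑ j : Fin n, if (i, j).2 ≠ (i, j).1 ∧ (i, j).2 ≠ (i, j).1 + 1
          ∧ (i, j).1 ≠ (i, j).2 + 1 then (1:ℕ) else 0)
      = ∑ _i : Fin n, (n - 3) := by
        apply Finset.sum_congr rfl
        intro i _
        exact inner i
    _ = n * (n - 3) := by rw [Finset.sum_const, Finset.card_univ, Fintype.card_fin,
          smul_eq_mul]

end B

section Master
variable {n : ℕ}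

lemma degenerate {F : Set (Finset (Fin n))} [DecidablePred (· ∈ F)] [NeZero n]
    (h4 : ∀ A ∈ F, A.card = 4) (p : Fin n × Fin n)
    (hp : ¬(p.2 ≠ p.1 ∧ p.2 ≠ p.1 + 1 ∧ p.1 ≠ p.2 + 1)) :
    Finset.univ.filter (fun c : Fin n ≃ Fin n =>
      ({c p.1, c (p.1 + 1)} ∪ {c p.2, c (p.2 + 1)} : Finset (Fin n)) ∈ F) = ∅ := by
  obtain ⟨i, j⟩ := p
  simp only [ne_eq, not_and_or, not_not] at hp
  rw [Finset.eq_empty_iff_forall_notMem]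
  intro c hc
  rw [Finset.mem_filter] at hc
  have hmemF := hc.2
  dsimp only at hmemF
  have hcard := h4 _ hmemF
  have hle3 : ∀ a b d : Fin n, (({a, b, d} : Finset (Fin n)).card ≤ 3) := by
    intro a b d
    calc ({a, b, d} : Finset (Fin n)).card ≤ ({b, d} : Finset (Fin n)).card + 1 :=
          Finset.card_insert_le _ _
      _ ≤ (({d} : Finset (Fin n)).card + 1) + 1 := by
          have := Finset.card_insert_le b ({d} : Finset (Fin n))
          omega
      _ ≤ 3 := by simp
  rcases hp with heq | heq | heq
  · rw [heq, Finset.union_self] at hcard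
    have : ({c i, c (i + 1)} : Finset (Fin n)).card ≤ 2 :=
      le_trans (Finset.card_insert_le _ _) (by simp)
    omega
  · rw [heq] at hcard
    have hsub : ({c i, c (i + 1)} ∪ {c (i + 1), c (i + 1 + 1)} : Finset (Fin n))
        ⊆ {c i, c (i + 1), c (i + 1 + 1)} := by
      intro x hx
      simp only [Finset.mem_union, Finset.mem_insert, Finset.mem_singleton] at hx ⊢
      tauto
    have := le_trans (Finset.card_le_card hsub) (hle3 _ _ _)
    omega
  · rw [heq] at hcard
    have hsub : ({c (j + 1), c (j + 1 + 1)} ∪ {c j, c (j + 1)} : Finset (Fin n))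
        ⊆ {c j, c (j + 1), c (j + 1 + 1)} := by
      intro x hx
      simp only [Finset.mem_union, Finset.mem_insert, Finset.mem_singleton] at hx ⊢
      tauto
    have := le_trans (Finset.card_le_card hsub) (hle3 _ _ _)
    omega

lemma lower_bound (hn : 4 ≤ n) (F : Set (Finset (Fin n)))
    (h4 : ∀ A ∈ F, A.card = 4)
    (hb : ∀ c : Fin n ≃ Fin n, ¬ IsHP22Acceptable F c) :
    (n - 1) * (n - 2) ≤ 6 * F.ncard := by
  classical
  haveI : NeZero n := ⟨by omega⟩
  set F' : Finset (Finset (Fin n)) := (Set.toFinite F).toFinset with hF'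
  have hncard : F.ncard = F'.card := Set.ncard_eq_toFinset_card F (Set.toFinite F)
  set N : ℕ := ∑ c : Fin n ≃ Fin n, (Finset.univ.filter (fun p : Fin n × Fin n =>
    ({c p.1, c (p.1 + 1)} ∪ {c p.2, c (p.2 + 1)} : Finset (Fin n)) ∈ F)).card with hN
  -- lower bound on N
  have hNlow : 4 * Nat.factorial n ≤ N := by
    rw [hN]
    calc 4 * Nat.factorial n
        = ∑ _c : Fin n ≃ Fin n, 4 := by
          rw [Finset.sum_const, Finset.card_univ]
          simp [Fintype.card_perm, mul_comm]
      _ ≤ _ := Finset.sum_le_sum (fun c _ => four_le_bad hn h4 hb c)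
  -- swap summation
  have hswap : N = ∑ p : Fin n × Fin n, (Finset.univ.filter (fun c : Fin n ≃ Fin n =>
      ({c p.1, c (p.1 + 1)} ∪ {c p.2, c (p.2 + 1)} : Finset (Fin n)) ∈ F)).card := by
    rw [hN]
    simp only [Finset.card_filter]
    exact Finset.sum_comm
  -- bound each term for p in A
  set A : Finset (Fin n × Fin n) := Finset.univ.filter (fun p : Fin n × Fin n =>
    p.2 ≠ p.1 ∧ p.2 ≠ p.1 + 1 ∧ p.1 ≠ p.2 + 1) with hA
  have hbound : ∀ p ∈ A, (Finset.univ.filter (fun c : Fin n ≃ Fin n =>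
      ({c p.1, c (p.1 + 1)} ∪ {c p.2, c (p.2 + 1)} : Finset (Fin n)) ∈ F)).card
        ≤ F'.card * (24 * Nat.factorial (n - 4)) := by
    intro p hp
    rw [hA, Finset.mem_filter] at hp
    obtain ⟨-, hji, hji1, hij1⟩ := hp
    have hsub : Finset.univ.filter (fun c : Fin n ≃ Fin n =>
        ({c p.1, c (p.1 + 1)} ∪ {c p.2, c (p.2 + 1)} : Finset (Fin n)) ∈ F)
        ⊆ F'.biUnion (fun X => Finset.univ.filter (fun c : Fin n ≃ Fin n =>
          ({c p.1, c (p.1 + 1)} ∪ {c p.2, c (p.2 + 1)} : Finset (Fin n)) = X)) := by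
      intro c hc
      rw [Finset.mem_filter] at hc
      rw [Finset.mem_biUnion]
      exact ⟨_, (Set.Finite.mem_toFinset _).mpr hc.2, by simp⟩
    refine le_trans (Finset.card_le_card hsub) (le_trans (Finset.card_biUnion_le) ?_)
    have : ∀ X ∈ F', (Finset.univ.filter (fun c : Fin n ≃ Fin n =>
        ({c p.1, c (p.1 + 1)} ∪ {c p.2, c (p.2 + 1)} : Finset (Fin n)) = X)).card
          ≤ 24 * Nat.factorial (n - 4) := by
      intro X hX
      have hX4 : X.card = 4 := h4 X ((Set.Finite.mem_toFinset _).mp hX)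
      refine fiber_le ?_ ?_ ?_ ?_ ?_ ?_ X hX4
      · exact succ_ne hn p.1
      · exact hji.symm
      · exact hij1
      · exact hji1.symm
      · exact fun h => hji (((add_left_inj 1).mp h).symm)
      · exact succ_ne hn p.2
    calc (∑ X ∈ F', (Finset.univ.filter (fun c : Fin n ≃ Fin n =>
        ({c p.1, c (p.1 + 1)} ∪ {c p.2, c (p.2 + 1)} : Finset (Fin n)) = X)).card)
        ≤ F'.card • (24 * Nat.factorial (n - 4)) := Finset.sum_le_card_nsmul _ _ _ this
      _ = F'.card * (24 * Nat.factorial (n - 4)) := by rw [smul_eq_mul]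
  -- N as sum over A only
  have hNA : N = ∑ p ∈ A, (Finset.univ.filter (fun c : Fin n ≃ Fin n =>
      ({c p.1, c (p.1 + 1)} ∪ {c p.2, c (p.2 + 1)} : Finset (Fin n)) ∈ F)).card := by
    rw [hswap]
    symm
    apply Finset.sum_subset (Finset.subset_univ A)
    intro p _ hp
    rw [hA, Finset.mem_filter] at hp
    simp only [Finset.mem_univ, true_and] at hp
    rw [degenerate h4 p hp, Finset.card_empty]
  have hNhigh : N ≤ n * (n - 3) * (F'.card * (24 * Nat.factorial (n - 4))) := by
    rw [hNA]
    calc (∑ p ∈ A, (Finset.univ.filter (fun c : Fin n ≃ Fin n =>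
        ({c p.1, c (p.1 + 1)} ∪ {c p.2, c (p.2 + 1)} : Finset (Fin n)) ∈ F)).card)
        ≤ A.card • (F'.card * (24 * Nat.factorial (n - 4))) :=
          Finset.sum_le_card_nsmul _ _ _ hbound
      _ = n * (n - 3) * (F'.card * (24 * Nat.factorial (n - 4))) := by
          rw [smul_eq_mul, hA, A_card hn]
  -- final arithmetic
  obtain ⟨m, rfl⟩ : ∃ m, n = m + 4 := ⟨n - 4, by omega⟩
  have hfact : Nat.factorial (m + 4) = (m+4)*(m+3)*(m+2)*(m+1)*Nat.factorial m := by
    simp [Nat.factorial_succ]; ring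
  have H : 4 * Nat.factorial (m + 4)
      ≤ (m+4) * (m+1) * (F'.card * (24 * Nat.factorial m)) := by
    have := le_trans hNlow hNhigh
    have e1 : m + 4 - 3 = m + 1 := by omega
    have e2 : m + 4 - 4 = m := by omega
    rw [e1, e2] at this
    exact this
  rw [hncard]
  have e3 : m + 4 - 1 = m + 3 := by omega
  have e4 : m + 4 - 2 = m + 2 := by omega
  rw [e3, e4]
  rw [hfact] at H
  set K := F'.card
  set fm := Nat.factorial m with hfm
  have hfmpos : 0 < fm := Nat.factorial_pos m
  -- cancel
  have H2 : ((m+3)*(m+2)) * (4*(m+4)*(m+1)*fm) ≤ (6*K) * (4*(m+4)*(m+1)*fm) := by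
    have hL : ((m+3)*(m+2)) * (4*(m+4)*(m+1)*fm) = 4*((m+4)*(m+3)*(m+2)*(m+1)*fm) := by ring
    have hR : (6*K) * (4*(m+4)*(m+1)*fm) = (m+4)*(m+1)*(K*(24*fm)) := by ring
    rw [hL, hR]
    exact H
  exact Nat.le_of_mul_le_mul_right H2 (by positivity)

end Master

/-- **Theorem.**  For `n ≥ 4` we have `(n−3)(n−2)/6 ≤ p((2,2),n) ≤ C(n−2,2)`, the upper
bound being witnessed by the family `F = {X ∈ [n]^(4) : 1 ∈ X, 2 ∈ X}`, for which `K_n`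
has no `(2,2)`-acceptable Hamilton path.  (Here `[n]` is modelled as `Fin n`, with the
elements `1, 2 ∈ [n]` corresponding to the values `0, 1`.) -/
theorem hamilton_path_two_two_bounds (n : ℕ) (hn : 4 ≤ n) :
    ((n : ℝ) - 3) * ((n : ℝ) - 2) / 6 ≤ (p22 n : ℝ) ∧
    p22 n ≤ Nat.choose (n - 2) 2 ∧
    ∀ c : Fin n ≃ Fin n,
      ¬ IsHP22Acceptable
        {X : Finset (Fin n) | X.card = 4 ∧
          (⟨0, by omega⟩ : Fin n) ∈ X ∧ (⟨1, by omega⟩ : Fin n) ∈ X} c := by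
  have hmem : (n - 2).choose 2 ∈ {m : ℕ | ∃ F : Set (Finset (Fin n)),
      (∀ A ∈ F, A.card = 4) ∧ F.ncard = m ∧
      ∀ c : Fin n ≃ Fin n, ¬ IsHP22Acceptable F c} := by
    refine ⟨{X : Finset (Fin n) | X.card = 4 ∧
      (⟨0, by omega⟩ : Fin n) ∈ X ∧ (⟨1, by omega⟩ : Fin n) ∈ X}, ?_, ?_, ?_⟩
    · exact fun A hA => hA.1
    · exact ncard_F0 hn
    · exact fun c => blocked hn c
  have hub : p22 n ≤ (n - 2).choose 2 := Nat.sInf_le hmem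
  have hsinf := Nat.sInf_mem (⟨_, hmem⟩ : Set.Nonempty _)
  obtain ⟨F, h4, hnc, hb⟩ := hsinf
  have hlow : (n - 1) * (n - 2) ≤ 6 * p22 n := by
    rw [show p22 n = F.ncard from hnc.symm]
    exact lower_bound hn F h4 hb
  refine ⟨?_, hub, fun c => blocked hn c⟩
  rw [div_le_iff₀ (by norm_num : (0:ℝ) < 6)]
  have hr : (((n - 1) * (n - 2) : ℕ) : ℝ) ≤ ((6 * p22 n : ℕ) : ℝ) := Nat.cast_le.mpr hlow
  have h1 : ((n - 1 : ℕ) : ℝ) = (n : ℝ) - 1 := by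
    rw [Nat.cast_sub (by omega)]; norm_num
  have h2 : ((n - 2 : ℕ) : ℝ) = (n : ℝ) - 2 := by
    rw [Nat.cast_sub (by omega)]; norm_num
  rw [Nat.cast_mul, Nat.cast_mul, h1, h2] at hr
  have hn4 : (4 : ℝ) ≤ (n : ℝ) := by exact_mod_cast hn
  push_cast at hr
  nlinarith [hr, hn4]
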